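/- (Noether's theorem for internal symmetries, coordinate form.) Let L : ℝⁿ × (ℝⁿ)ᵐ → ℝ be C² (a first-order Lagrangian L(y, v) of n fields yⁱ and their m multivelocities vⁱ_μ), and let ξ : ℝⁿ → ℝⁿ be C¹. Assume the infinitesimal invariance condition: for all (y, v), Σᵢ (∂L/∂yⁱ)(y,v)·ξⁱ(y) + Σ_{i,μ} (∂L/∂vⁱ_μ)(y,v)·Σⱼ (∂ξⁱ/∂yʲ)(y)·vʲ_μ = 0. Let y : ℝᵐ → ℝⁿ be a C² solution of the Euler–Lagrange equations: for all x and i, (∂L/∂yⁱ)(y(x), ∂y(x)) = Σ_μ ∂/∂x^μ [(∂L/∂vⁱ_μ)(y(x), ∂y(x))], where ∂y(x) denotes the matrix (∂yⁱ/∂x^μ)(x). Then the Noether current jᵘ(x) := Σᵢ (∂L/∂vⁱ_μ)(y(x), ∂y(x))·ξⁱ(y(x)) is conserved: Σ_μ ∂jᵘ/∂x^μ (x) = 0 for all x. -/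

import Mathlib

/-- Partial derivative of a first-order Lagrangian `L(y, v)` with respect to the field
value `yⁱ`, at the point `p = (y, v)`. -/
noncomputable def pdY (n m : ℕ) (L : (Fin n → ℝ) × (Fin n → Fin m → ℝ) → ℝ)
    (i : Fin n) (p : (Fin n → ℝ) × (Fin n → Fin m → ℝ)) : ℝ :=
  fderiv ℝ L p (Pi.single i 1, 0)

/-- Partial derivative of a first-order Lagrangian `L(y, v)` with respect to the
multivelocity `vⁱ_μ`, at the point `p = (y, v)`. -/
noncomputable def pdV (n m : ℕ) (L : (Fin n → ℝ) × (Fin n → Fin m → ℝ) → ℝ)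
    (i : Fin n) (μ : Fin m) (p : (Fin n → ℝ) × (Fin n → Fin m → ℝ)) : ℝ :=
  fderiv ℝ L p (0, Pi.single i (Pi.single μ 1))

/-- The matrix `∂y(x) = (∂yⁱ/∂x^μ)(x)` of spacetime derivatives of a field `y : ℝᵐ → ℝⁿ`. -/
noncomputable def jet (n m : ℕ) (y : (Fin m → ℝ) → (Fin n → ℝ)) (x : Fin m → ℝ) :
    Fin n → Fin m → ℝ :=
  fun i μ => fderiv ℝ (fun x' => y x' i) x (Pi.single μ 1)

lemma fderiv_expand {n : ℕ} (A : (Fin n → ℝ) →L[ℝ] ℝ) (v : Fin n → ℝ) :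
    A v = ∑ j, v j * A (Pi.single j 1) := by
  have hv : v = ∑ j, v j • (Pi.single j 1 : Fin n → ℝ) := by
    funext k
    simp [Finset.sum_apply, Pi.single_apply]
  conv_lhs => rw [hv]
  rw [map_sum]
  simp [smul_eq_mul]

/-- **Noether's theorem for internal symmetries, coordinate form.**
Let `L : ℝⁿ × (ℝⁿ)ᵐ → ℝ` be a C² first-order Lagrangian and `ξ : ℝⁿ → ℝⁿ` a C¹
infinitesimal internal symmetry:
`Σᵢ ∂L/∂yⁱ·ξⁱ(y) + Σ_{i,μ} ∂L/∂vⁱ_μ · Σⱼ ∂ξⁱ/∂yʲ(y)·vʲ_μ = 0` for all `(y,v)`.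
If `y : ℝᵐ → ℝⁿ` is a C² solution of the Euler–Lagrange equations, then the Noether
current `jᵘ(x) = Σᵢ ∂L/∂vⁱ_μ(y(x), ∂y(x))·ξⁱ(y(x))` is conserved: `Σ_μ ∂_μ jᵘ = 0`. -/
theorem noether_theorem_internal_symmetry
    (n m : ℕ)
    (L : (Fin n → ℝ) × (Fin n → Fin m → ℝ) → ℝ) (hL : ContDiff ℝ 2 L)
    (ξ : (Fin n → ℝ) → (Fin n → ℝ)) (hξ : ContDiff ℝ 1 ξ)
    (hinv : ∀ p : (Fin n → ℝ) × (Fin n → Fin m → ℝ),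
      (∑ i, pdY n m L i p * ξ p.1 i)
        + ∑ i, ∑ μ, pdV n m L i μ p *
            (∑ j, fderiv ℝ (fun y' => ξ y' i) p.1 (Pi.single j 1) * p.2 j μ) = 0)
    (y : (Fin m → ℝ) → (Fin n → ℝ)) (hy : ContDiff ℝ 2 y)
    (hEL : ∀ (x : Fin m → ℝ) (i : Fin n),
      pdY n m L i (y x, jet n m y x)
        = ∑ μ, fderiv ℝ (fun x' => pdV n m L i μ (y x', jet n m y x')) x (Pi.single μ 1)) :
    ∀ x : Fin m → ℝ,
      ∑ μ, fderiv ℝ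
          (fun x' => ∑ i, pdV n m L i μ (y x', jet n m y x') * ξ (y x') i)
          x (Pi.single μ 1) = 0 := by
  intro x
  have hy1 : Differentiable ℝ y := hy.differentiable (by norm_num)
  -- jet in terms of the full derivative of y
  have hjet_eq : ∀ x', jet n m y x' = fun i μ => fderiv ℝ y x' (Pi.single μ 1) i := by
    intro x'
    funext i μ
    show fderiv ℝ (fun x'' => y x'' i) x' (Pi.single μ 1) = _
    have hc : HasFDerivAt (fun x'' => y x'' i)
        ((ContinuousLinearMap.proj i : (Fin n → ℝ) →L[ℝ] ℝ).comp (fderiv ℝ y x')) x' :=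
      (ContinuousLinearMap.proj i : (Fin n → ℝ) →L[ℝ] ℝ).hasFDerivAt.comp x'
        (hy1 x').hasFDerivAt
    rw [hc.fderiv]
    rfl
  -- jet is C¹
  have hjet : ContDiff ℝ 1 (jet n m y) := by
    have h1 : ContDiff ℝ 1 (fderiv ℝ y) := hy.fderiv_right (by norm_num)
    have h2 : ContDiff ℝ 1
        (fun x' => (fun (i : Fin n) (μ : Fin m) => fderiv ℝ y x' (Pi.single μ 1) i)) := by
      apply contDiff_pi.2; intro i; apply contDiff_pi.2; intro μ
      exact contDiff_pi.1 (h1.clm_apply contDiff_const) i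
    have : jet n m y = fun x' => (fun (i : Fin n) (μ : Fin m) => fderiv ℝ y x' (Pi.single μ 1) i) := by
      funext x'; exact hjet_eq x'
    rw [this]; exact h2
  have hF : ContDiff ℝ 1 (fun x' => (y x', jet n m y x')) :=
    (hy.of_le (by norm_num) : ContDiff ℝ 1 y).prodMk hjet
  have hL1 : ContDiff ℝ 1 (fderiv ℝ L) := hL.fderiv_right (by norm_num)
  -- differentiability of the momentum along the solution
  have hP : ∀ (i : Fin n) (μ : Fin m),
      Differentiable ℝ (fun x' => pdV n m L i μ (y x', jet n m y x')) := by
    intro i μ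
    have h2 : ContDiff ℝ 1 (fun x' => fderiv ℝ L (y x', jet n m y x')
        ((0 : Fin n → ℝ), (Pi.single i (Pi.single μ 1) : Fin n → Fin m → ℝ))) :=
      (hL1.comp hF).clm_apply contDiff_const
    exact h2.differentiable one_ne_zero
  have hQ : ∀ i : Fin n, Differentiable ℝ (fun x' => ξ (y x') i) := by
    intro i
    have hξy : ContDiff ℝ 1 (fun x' => ξ (y x')) := hξ.comp (hy.of_le (by norm_num))
    exact (contDiff_pi.1 hξy i).differentiable one_ne_zero
  -- chain rule for ξ ∘ y
  have hQd : ∀ (i : Fin n) (μ : Fin m),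
      fderiv ℝ (fun x' => ξ (y x') i) x (Pi.single μ 1)
        = ∑ j, fderiv ℝ (fun y' => ξ y' i) (y x) (Pi.single j 1) * jet n m y x j μ := by
    intro i μ
    have hgi : Differentiable ℝ (fun y' => ξ y' i) :=
      (contDiff_pi.1 hξ i).differentiable one_ne_zero
    have hcomp : fderiv ℝ (fun x' => ξ (y x') i) x
        = (fderiv ℝ (fun y' => ξ y' i) (y x)).comp (fderiv ℝ y x) :=
      fderiv_comp x (hgi (y x)) (hy1 x)
    rw [hcomp, ContinuousLinearMap.comp_apply,
      fderiv_expand (fderiv ℝ (fun y' => ξ y' i) (y x)) (fderiv ℝ y x (Pi.single μ 1))]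
    congr 1; funext j
    rw [hjet_eq x]
    ring
  -- product rule
  have key : ∀ μ : Fin m,
      fderiv ℝ (fun x' => ∑ i, pdV n m L i μ (y x', jet n m y x') * ξ (y x') i)
          x (Pi.single μ 1)
      = ∑ i, (fderiv ℝ (fun x' => pdV n m L i μ (y x', jet n m y x')) x (Pi.single μ 1)
            * ξ (y x) i
          + pdV n m L i μ (y x, jet n m y x)
            * fderiv ℝ (fun x' => ξ (y x') i) x (Pi.single μ 1)) := by
    intro μ
    rw [fderiv_fun_sum (fun i _ => ((hP i μ x).fun_mul (hQ i x)))]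
    rw [ContinuousLinearMap.sum_apply]
    refine Finset.sum_congr rfl (fun i _ => ?_)
    rw [fderiv_fun_mul (hP i μ x) (hQ i x)]
    simp [smul_eq_mul]
    ring
  calc ∑ μ, fderiv ℝ (fun x' => ∑ i, pdV n m L i μ (y x', jet n m y x') * ξ (y x') i)
          x (Pi.single μ 1)
      = ∑ μ, ∑ i, (fderiv ℝ (fun x' => pdV n m L i μ (y x', jet n m y x')) x (Pi.single μ 1)
            * ξ (y x) i
          + pdV n m L i μ (y x, jet n m y x)
            * fderiv ℝ (fun x' => ξ (y x') i) x (Pi.single μ 1)) :=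
        Finset.sum_congr rfl (fun μ _ => key μ)
    _ = ∑ i, ((∑ μ, fderiv ℝ (fun x' => pdV n m L i μ (y x', jet n m y x')) x (Pi.single μ 1))
            * ξ (y x) i
          + ∑ μ, pdV n m L i μ (y x, jet n m y x)
            * fderiv ℝ (fun x' => ξ (y x') i) x (Pi.single μ 1)) := by
        rw [Finset.sum_comm]
        refine Finset.sum_congr rfl (fun i _ => ?_)
        rw [Finset.sum_add_distrib, Finset.sum_mul]
    _ = (∑ i, pdY n m L i (y x, jet n m y x) * ξ (y x) i)
          + ∑ i, ∑ μ, pdV n m L i μ (y x, jet n m y x)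
            * (∑ j, fderiv ℝ (fun y' => ξ y' i) (y x) (Pi.single j 1) * jet n m y x j μ) := by
        rw [Finset.sum_add_distrib]
        congr 1
        · exact Finset.sum_congr rfl (fun i _ => by rw [← hEL x i])
        · exact Finset.sum_congr rfl (fun i _ => Finset.sum_congr rfl (fun μ _ => by
            rw [hQd i μ]))
    _ = 0 := hinv (y x, jet n m y x)
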